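/- arXiv:2504.04307 — 2 statements merged into one kernel-verified Lean document; each statement's English description precedes it below -/
import Mathlib

section
/- Let K be an algebraically closed field and F ⊆ K a subfield such that K has transcendence degree equal to |K| over F. Then the cardinality of the group Aut(K/F) of automorphisms of K fixing F pointwise is at least 2^|K|; in particular it is strictly greater than |K|. -/
open Cardinal

/-- If `K` is an algebraically closed field with transcendence basis `s` over `F`,
then each permutation of `s` extends to an `F`-algebra automorphism of `K`. -/
noncomputable def permToAut
    (F K : Type*) [Field F] [Field K] [Algebra F K] [IsAlgClosed K]
    (s : Set K) (hs : IsTranscendenceBasis F ((↑) : s → K)) (σ : Equiv.Perm s) :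
    K ≃ₐ[F] K := by
  letI := IsAlgClosed.isAlgClosure_of_transcendence_basis _ hs
  let φ : Algebra.adjoin F (Set.range ((↑) : s → K)) ≃ₐ[F]
      Algebra.adjoin F (Set.range ((↑) : s → K)) :=
    hs.1.aevalEquiv.symm.trans ((MvPolynomial.renameEquiv F σ).trans hs.1.aevalEquiv)
  let g : K ≃+* K := IsAlgClosure.equivOfEquiv K K φ.toRingEquiv
  exact
  { g with
    commutes' := fun a => by
      have h1 : algebraMap F K a =
          algebraMap (Algebra.adjoin F (Set.range ((↑) : s → K))) K (algebraMap F _ a) := by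
        rw [← IsScalarTower.algebraMap_apply]
      show g (algebraMap F K a) = algebraMap F K a
      rw [h1, IsAlgClosure.equivOfEquiv_algebraMap]
      exact congrArg (algebraMap _ K) (φ.commutes a) }

theorem permToAut_apply
    (F K : Type*) [Field F] [Field K] [Algebra F K] [IsAlgClosed K]
    (s : Set K) (hs : IsTranscendenceBasis F ((↑) : s → K)) (σ : Equiv.Perm s) (i : s) :
    permToAut F K s hs σ (i : K) = (σ i : K) := by
  letI := IsAlgClosed.isAlgClosure_of_transcendence_basis _ hs
  have key : ∀ j : s, algebraMap (Algebra.adjoin F (Set.range ((↑) : s → K))) K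
      (hs.1.aevalEquiv (MvPolynomial.X j)) = (j : K) := fun j => by
    rw [hs.1.algebraMap_aevalEquiv, MvPolynomial.aeval_X]
  show (IsAlgClosure.equivOfEquiv K K
      (hs.1.aevalEquiv.symm.trans
        ((MvPolynomial.renameEquiv F σ).trans hs.1.aevalEquiv)).toRingEquiv : K ≃+* K)
      (i : K) = (σ i : K)
  rw [← key i, IsAlgClosure.equivOfEquiv_algebraMap, ← key (σ i)]
  have : (hs.1.aevalEquiv.symm.trans ((MvPolynomial.renameEquiv F σ).trans hs.1.aevalEquiv))
      (hs.1.aevalEquiv (MvPolynomial.X i)) = hs.1.aevalEquiv (MvPolynomial.X (σ i)) := by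
    simp [MvPolynomial.rename_X]
  exact congrArg (algebraMap _ K) this

/-- If `K` is algebraically closed with transcendence degree `|K|` over a
subfield `F`, then `|Aut(K/F)| ≥ 2 ^ |K| > |K|`. -/
theorem aut_card_gt_of_trdeg_eq_card
    (F K : Type*) [Field F] [Field K] [Algebra F K] [IsAlgClosed K]
    (s : Set K) (hs : IsTranscendenceBasis F ((↑) : s → K))
    (hcard : Cardinal.mk s = Cardinal.mk K) :
    2 ^ Cardinal.mk K ≤ Cardinal.mk (K ≃ₐ[F] K) ∧
      Cardinal.mk K < Cardinal.mk (K ≃ₐ[F] K) := by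
  have hsinf : Infinite s := by
    rw [Cardinal.infinite_iff, hcard, ← Cardinal.infinite_iff]
    infer_instance
  have hinj : Function.Injective (permToAut F K s hs) := by
    intro σ τ h
    ext i
    have := congrArg (fun e : K ≃ₐ[F] K => e (i : K)) h
    simp only [permToAut_apply] at this
    exact this
  have h1 : 2 ^ Cardinal.mk K ≤ Cardinal.mk (K ≃ₐ[F] K) := by
    calc 2 ^ Cardinal.mk K = #(Equiv.Perm s) := by rw [Cardinal.mk_perm_eq_two_power, hcard]
    _ ≤ _ := Cardinal.mk_le_of_injective hinj
  exact ⟨h1, lt_of_lt_of_le (Cardinal.cantor _) h1⟩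
end

section
/- Let K be an uncountable algebraically closed field and F a finitely generated subfield of K. Then the cardinality of Aut(K/F) is strictly greater than |K|. -/
open Cardinal

/-- Any permutation of a transcendence basis of an algebraically closed field `K` over `F`
extends to a ring automorphism of `K` fixing `F` pointwise. -/
theorem exists_ringEquiv_of_perm_transcendence_basis
    {F K : Type*} [Field F] [Field K] [Algebra F K] [IsAlgClosed K]
    {ι : Type*} {v : ι → K} (hv : IsTranscendenceBasis F v) (e : Equiv.Perm ι) :
    ∃ φ : K ≃+* K, (∀ r : F, φ (algebraMap F K r) = algebraMap F K r) ∧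
      ∀ i, φ (v i) = v (e i) := by
  letI := IsAlgClosed.isAlgClosure_of_transcendence_basis v hv
  let e' : Algebra.adjoin F (Set.range v) ≃ₐ[F] Algebra.adjoin F (Set.range v) :=
    hv.1.aevalEquiv.symm.trans ((MvPolynomial.renameEquiv F e).trans hv.1.aevalEquiv)
  refine ⟨IsAlgClosure.equivOfEquiv K K e'.toRingEquiv, fun r => ?_, fun i => ?_⟩
  · have h0 : algebraMap F K r =
        algebraMap (Algebra.adjoin F (Set.range v)) K
          (algebraMap F (Algebra.adjoin F (Set.range v)) r) := by
      rw [← IsScalarTower.algebraMap_apply]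
    rw [h0, IsAlgClosure.equivOfEquiv_algebraMap]
    congr 1
    exact e'.commutes r
  · have h1 : v i = algebraMap (Algebra.adjoin F (Set.range v)) K
        (hv.1.aevalEquiv (MvPolynomial.X i)) := by
      rw [hv.1.algebraMap_aevalEquiv, MvPolynomial.aeval_X]
    rw [h1, IsAlgClosure.equivOfEquiv_algebraMap]
    have h2 : e'.toRingEquiv (hv.1.aevalEquiv (MvPolynomial.X i)) =
        hv.1.aevalEquiv (MvPolynomial.X (e i)) := by
      show e' _ = _
      simp only [e', AlgEquiv.trans_apply, AlgEquiv.symm_apply_apply,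
        MvPolynomial.renameEquiv_apply, MvPolynomial.rename_X]
    rw [h2, hv.1.algebraMap_aevalEquiv, MvPolynomial.aeval_X]

/-- If `K` is an uncountable algebraically closed field and `F` a finitely
generated subfield, then the group of automorphisms of `K` fixing `F`
pointwise has cardinality strictly greater than `|K|`. -/
theorem aut_card_gt_of_fg_subfield
    (K : Type*) [Field K] [IsAlgClosed K] [Uncountable K]
    (F : Subfield K) (hfg : ∃ s : Finset K, F = Subfield.closure ↑s) :
    Cardinal.mk K <
      Cardinal.mk {φ : K ≃+* K // ∀ x ∈ F, φ x = x} := by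
  classical
  obtain ⟨t, rfl⟩ := hfg
  set F : Subfield K := Subfield.closure ↑t with hF
  have hFcount : #F ≤ ℵ₀ := by
    refine (Subfield.cardinalMk_closure_le_max (↑t : Set K)).trans (max_le ?_ le_rfl)
    exact Cardinal.mk_le_aleph0
  have hK : ℵ₀ < #K := Cardinal.aleph0_lt_mk
  have hinj : Function.Injective (algebraMap F K) := Subtype.val_injective
  obtain ⟨s, hs⟩ := exists_isTranscendenceBasis (F : Type _) K
  have hcard : #K = #s :=
    Cardinal.lift_inj.mp
      (IsAlgClosed.cardinal_eq_cardinal_transcendence_basis_of_aleph0_lt _ hs hFcount hK)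
  have hsinf : Infinite s := Cardinal.infinite_iff.mpr (by rw [← hcard]; exact hK.le)
  -- injection from permutations of `s` into the automorphism group
  have key : ∀ e : Equiv.Perm s, ∃ φ : K ≃+* K, (∀ x ∈ F, φ x = x) ∧
      ∀ i : s, φ (i : K) = ((e i : s) : K) := by
    intro e
    obtain ⟨φ, h1, h2⟩ := exists_ringEquiv_of_perm_transcendence_basis hs e
    exact ⟨φ, fun x hx => h1 ⟨x, hx⟩, h2⟩
  choose φ hφF hφv using key
  have hinj2 : Function.Injective
      (fun e : Equiv.Perm s => (⟨φ e, hφF e⟩ : {ψ : K ≃+* K // ∀ x ∈ F, ψ x = x})) := by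
    intro e₁ e₂ h
    have h' : φ e₁ = φ e₂ := congrArg Subtype.val h
    ext i
    rw [← hφv e₁ i, h', hφv e₂ i]
  have h2 : #(Equiv.Perm s) ≤ #{ψ : K ≃+* K // ∀ x ∈ F, ψ x = x} :=
    Cardinal.mk_le_of_injective hinj2
  rw [Cardinal.mk_perm_eq_two_power] at h2
  calc #K = #s := hcard
    _ < 2 ^ #s := Cardinal.cantor _
    _ ≤ _ := h2
end
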